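/- arXiv:2101.05999 — 5 statements merged into one kernel-verified Lean document; each statement's English description precedes it below -/
import Mathlib

section
/- Let f be a loop-count function on states of n crossings that is B-pseudo-adequate, i.e. f(Function.update s_B i false) ≤ f(s_B) for every index i. Then for every state s with α(s) ≥ 1, one has f(s) ≤ f(s_B) + α(s) − 1. -/
open LaurentPolynomial

/-- Maximal degree (max of the support), with convention `odeg 0 = 0`. -/
noncomputable def odeg (g : LaurentPolynomial ℤ) : ℤ := g.coeff.support.max.unbotD 0

/-- Minimal degree (min of the support), with convention `udeg 0 = 0`. -/
noncomputable def udeg (g : LaurentPolynomial ℤ) : ℤ := g.coeff.support.min.untopD 0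

/-- The span of a Laurent polynomial. -/
noncomputable def lspan (g : LaurentPolynomial ℤ) : ℤ := odeg g - udeg g

/-- Number of crossings spliced by an A-splice in the state `s`. -/
def alpha {n : ℕ} (s : Fin n → Bool) : ℕ :=
  (Finset.univ.filter (fun i => s i = false)).card

/-- Number of crossings spliced by a B-splice in the state `s`. -/
def beta {n : ℕ} (s : Fin n → Bool) : ℕ :=
  (Finset.univ.filter (fun i => s i = true)).card

/-- A loop-count function: at least one loop in every state, and changing the
splice at one crossing changes the number of loops by at most one. -/
def IsLoopCount {n : ℕ} (f : (Fin n → Bool) → ℕ) : Prop :=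
  (∀ s, 1 ≤ f s) ∧
    ∀ (s : Fin n → Bool) (i : Fin n),
      |(f (Function.update s i (!(s i))) : ℤ) - (f s : ℤ)| ≤ 1

/-- The weight `A^(α(s)-β(s)) * (-A^2 - A^(-2))^(f(s)-1)` of a state `s`. -/
noncomputable def weight {n : ℕ} (f : (Fin n → Bool) → ℕ) (s : Fin n → Bool) :
    LaurentPolynomial ℤ :=
  T ((alpha s : ℤ) - (beta s : ℤ)) * (-T 2 - T (-2)) ^ (f s - 1)

/-- The Kauffman bracket of a loop-count function: the sum of the weights. -/
noncomputable def bracket {n : ℕ} (f : (Fin n → Bool) → ℕ) : LaurentPolynomial ℤ :=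
  ∑ s : Fin n → Bool, weight f s
/-- If `f` is B-pseudo-adequate, then for every state `s` with `α(s) ≥ 1`,
`f(s) ≤ f(s_B) + α(s) - 1`. -/
theorem loopCount_le_sB_add_alpha_sub_one {n : ℕ} (f : (Fin n → Bool) → ℕ)
    (hf : IsLoopCount f)
    (hB : ∀ i : Fin n, f (Function.update (fun _ => true) i false) ≤ f (fun _ => true))
    (s : Fin n → Bool) (hs : 1 ≤ alpha s) :
    (f s : ℤ) ≤ (f (fun _ => true) : ℤ) + (alpha s : ℤ) - 1 := by

  obtain ⟨hf1, hf2⟩ := hf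
  have key : ∀ k : ℕ, ∀ s : Fin n → Bool, alpha s = k + 1 →
      (f s : ℤ) ≤ (f (fun _ => true) : ℤ) + k := by
    intro k
    induction k with
    | zero =>
      intro s hs1
      unfold alpha at hs1
      obtain ⟨i, hi⟩ := Finset.card_eq_one.mp hs1
      have hsi : s = Function.update (fun _ => true) i false := by
        funext j
        by_cases hj : j = i
        · subst hj
          have hm : j ∈ Finset.univ.filter (fun i => s i = false) :=
            hi ▸ Finset.mem_singleton_self j
          simp only [Finset.mem_filter] at hm
          simp [hm.2, Function.update]
        · have hm : j ∉ Finset.univ.filter (fun i => s i = false) := by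
            rw [hi]; simpa using hj
          simp only [Finset.mem_filter, Finset.mem_univ, true_and] at hm
          simp only [Bool.not_eq_false] at hm
          simp [Function.update, hj, hm]
      rw [hsi]
      have := hB i
      push_cast
      omega
    | succ k ih =>
      intro s hs1
      have hne : (Finset.univ.filter (fun i => s i = false)).Nonempty := by
        rw [← Finset.card_pos]
        unfold alpha at hs1
        omega
      obtain ⟨i, hi⟩ := hne
      have hsi : s i = false := by simpa using hi
      have halpha : alpha (Function.update s i true) = k + 1 := by
        have hset : Finset.univ.filter (fun j => Function.update s i true j = false)
            = (Finset.univ.filter (fun j => s j = false)).erase i := by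
          ext j
          by_cases hj : j = i <;> simp [Function.update, hj, Finset.mem_erase]
        unfold alpha at hs1 ⊢
        rw [hset, Finset.card_erase_of_mem hi, hs1]; omega
      have h1 := ih (Function.update s i true) halpha
      have h2 := hf2 s i
      have hupd : Function.update s i (!(s i)) = Function.update s i true := by
        rw [hsi]; rfl
      rw [hupd] at h2
      have h3 := abs_le.mp h2
      push_cast
      omega
  obtain ⟨k, hk⟩ : ∃ k, alpha s = k + 1 := ⟨alpha s - 1, (Nat.succ_pred_eq_of_pos hs).symm⟩
  have := key k s hk
  rw [hk]
  push_cast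
  omega
end

section
/- Let f be a loop-count function on states of n crossings that is A-pseudo-adequate, i.e. f(Function.update s_A i true) ≤ f(s_A) for every index i. Then for every state s ≠ s_A one has ōdeg w(s) ≤ n + 2 f(s_A) − 4, which is strictly less than ōdeg w(s_A) = n + 2 f(s_A) − 2; consequently the bracket ⟨f⟩ := Σ_s w(s) is nonzero and ōdeg ⟨f⟩ = n + 2 f(s_A) − 2. -/
open LaurentPolynomial

noncomputable def Dp : LaurentPolynomial ℤ := -T 2 - T (-2)

lemma Dp_eq : Dp = AddMonoidAlgebra.single (2:ℤ) (-1:ℤ) + AddMonoidAlgebra.single (-2:ℤ) (-1:ℤ) := by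
  simp only [Dp, single_eq_C_mul_T, map_neg, map_one]
  ring

lemma one_coeff (q : ℤ) : (1 : LaurentPolynomial ℤ).coeff q = if (0:ℤ) = q then 1 else 0 := by
  rw [show (1 : LaurentPolynomial ℤ) = AddMonoidAlgebra.single (0:ℤ) (1:ℤ) from rfl, AddMonoidAlgebra.coeff_single, Finsupp.single_apply]

lemma mulDp (g : LaurentPolynomial ℤ) (q : ℤ) :
    (g * Dp).coeff q = g.coeff (q - 2) * (-1) + g.coeff (q + 2) * (-1) := by
  rw [Dp_eq, mul_add, AddMonoidAlgebra.coeff_add, Finsupp.add_apply, AddMonoidAlgebra.coeff_mul_single_apply,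
    AddMonoidAlgebra.coeff_mul_single_apply, ← sub_eq_add_neg, neg_neg]

lemma Dp_pow_coeff (k : ℕ) : (Dp ^ k).coeff (2 * k) = (-1) ^ k ∧ ∀ m ∈ (Dp ^ k).coeff.support, m ≤ 2 * k := by
  induction k with
  | zero =>
    refine ⟨by simp [one_coeff], ?_⟩
    intro m hm
    have h := Finsupp.mem_support_iff.mp hm
    rw [pow_zero, one_coeff] at h
    split_ifs at h with h'
    · push_cast
      omega
    · simp at h
  | succ k ih =>
    constructor
    · rw [pow_succ, mulDp]
      have h1 : (2 * ((k:ℤ)+1) - 2) = 2 * k := by ring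
      have h2 : (Dp ^ k).coeff (2 * ((k:ℤ)+1) + 2) = 0 := by
        by_contra h
        have := ih.2 _ (Finsupp.mem_support_iff.mpr h)
        omega
      push_cast
      rw [h1, h2, ih.1]
      ring
    · intro m hm
      rw [pow_succ] at hm
      have h := AddMonoidAlgebra.support_coeff_mul_subset _ _ hm
      rw [Finset.mem_add] at h
      obtain ⟨a, ha, b, hb, rfl⟩ := h
      have ha' := ih.2 a ha
      have hb' : b = 2 ∨ b = -2 := by
        have h2 := Finsupp.mem_support_iff.mp hb
        rw [Dp_eq, AddMonoidAlgebra.coeff_add, Finsupp.add_apply, AddMonoidAlgebra.coeff_single,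
          AddMonoidAlgebra.coeff_single, Finsupp.single_apply, Finsupp.single_apply] at h2
        split_ifs at h2 <;> omega
      push_cast
      omega


lemma odeg_eq_of {g : LaurentPolynomial ℤ} {d : ℤ} (h0 : g.coeff d ≠ 0)
    (hb : ∀ m ∈ g.coeff.support, m ≤ d) : odeg g = d := by
  have hd : d ∈ g.coeff.support := Finsupp.mem_support_iff.mpr h0
  have hmax : g.coeff.support.max = (d : WithBot ℤ) :=
    le_antisymm (Finset.max_le (fun m hm => WithBot.coe_le_coe.mpr (hb m hm)))
      (Finset.le_max hd)
  rw [odeg, hmax]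
  rfl

lemma weight_coeff {n : ℕ} (f : (Fin n → Bool) → ℕ) (s : Fin n → Bool) :
    (weight f s).coeff ((alpha s : ℤ) - beta s + 2 * (f s - 1 : ℕ)) = (-1) ^ (f s - 1) := by
  rw [weight, show (-T 2 - T (-2) : LaurentPolynomial ℤ) = Dp from rfl,
    show (T ((alpha s : ℤ) - (beta s : ℤ)) : LaurentPolynomial ℤ)
      = AddMonoidAlgebra.single ((alpha s : ℤ) - beta s) 1 from rfl,
    AddMonoidAlgebra.coeff_single_mul_apply]
  rw [show -((alpha s : ℤ) - beta s) + ((alpha s : ℤ) - beta s + 2 * (f s - 1 : ℕ))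
    = 2 * (f s - 1 : ℕ) by ring, (Dp_pow_coeff (f s - 1)).1, one_mul]

lemma weight_support {n : ℕ} (f : (Fin n → Bool) → ℕ) (s : Fin n → Bool) :
    ∀ m ∈ (weight f s).coeff.support, m ≤ (alpha s : ℤ) - beta s + 2 * (f s - 1 : ℕ) := by
  intro m hm
  rw [weight] at hm
  have h := AddMonoidAlgebra.support_coeff_mul_subset _ _ hm
  rw [Finset.mem_add] at h
  obtain ⟨a, ha, b, hb, rfl⟩ := h
  have ha' : a = (alpha s : ℤ) - beta s := by
    have ha2 : a ∈ (Finsupp.single ((alpha s:ℤ) - beta s) (1:ℤ)).support := ha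
    have := Finsupp.support_single_subset ha2
    simpa using this
  have hb' := (Dp_pow_coeff (f s - 1)).2 b hb
  omega

lemma weight_odeg {n : ℕ} (f : (Fin n → Bool) → ℕ) (s : Fin n → Bool) :
    odeg (weight f s) = (alpha s : ℤ) - beta s + 2 * (f s - 1 : ℕ) :=
  odeg_eq_of (by rw [weight_coeff]; exact pow_ne_zero _ (by norm_num)) (weight_support f s)

lemma alpha_add_beta {n : ℕ} (s : Fin n → Bool) : alpha s + beta s = n := by
  classical
  rw [alpha, beta, show (Finset.univ.filter (fun i => s i = true))
    = (Finset.univ.filter (fun i => ¬ s i = false)) by ext i; simp,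
    Finset.card_filter_add_card_filter_not]
  simp

lemma key {n : ℕ} (f : (Fin n → Bool) → ℕ) (hf : IsLoopCount f)
    (hA : ∀ i : Fin n, f (Function.update (fun _ => false) i true) ≤ f (fun _ => false)) :
    ∀ k : ℕ, ∀ s : Fin n → Bool, beta s = k + 1 →
      (f s : ℤ) ≤ (f (fun _ => false) : ℤ) + k := by
  intro k
  induction k with
  | zero =>
    intro s hs
    obtain ⟨i, hi⟩ := Finset.card_eq_one.mp hs
    have hsi : s i = true := by
      have : i ∈ Finset.univ.filter (fun j => s j = true) := hi ▸ Finset.mem_singleton_self i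
      simpa using this
    have hse : s = Function.update (fun _ => false) i true := by
      funext j
      by_cases hj : j = i
      · subst hj; simp [hsi, Function.update]
      · have : j ∉ Finset.univ.filter (fun j => s j = true) := by
          rw [hi]; simpa using hj
        simp at this
        simp [Function.update, hj, this]
    rw [hse]
    have := hA i
    push_cast
    omega
  | succ k ih =>
    intro s hs
    have hpos : (Finset.univ.filter (fun j => s j = true)).Nonempty := by
      rw [← Finset.card_pos, show (Finset.univ.filter (fun j => s j = true)).card = beta s from rfl, hs]
      omega
    obtain ⟨i, hi⟩ := hpos
    have hsi : s i = true := by simpa using hi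
    set s' := Function.update s i false with hs'
    have hbs' : beta s' = k + 1 := by
      have : Finset.univ.filter (fun j => s' j = true)
          = (Finset.univ.filter (fun j => s j = true)).erase i := by
        ext j
        by_cases hj : j = i <;> simp [hs', Function.update, hj]
      rw [beta, this, Finset.card_erase_of_mem hi, ← beta, hs]
      omega
    have hstep : (f s : ℤ) ≤ (f s' : ℤ) + 1 := by
      have h := hf.2 s' i
      have hupd : Function.update s' i (!(s' i)) = s := by
        have : s' i = false := by simp [hs', Function.update]
        rw [this]
        simp only [Bool.not_false, hs', Function.update_idem]
        rw [← hsi, Function.update_eq_self]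
      rw [hupd] at h
      have := abs_le.mp h
      omega
    have := ih s' hbs'
    push_cast
    push_cast at this
    omega


/-- If `f` is A-pseudo-adequate, then every state other than `s_A` has weight of
maximal degree at most `n + 2 f(s_A) - 4`, strictly less than
`ōdeg w(s_A) = n + 2 f(s_A) - 2`; consequently the bracket is nonzero and has
maximal degree `n + 2 f(s_A) - 2`. -/
theorem odeg_bracket_of_A_pseudo_adequate {n : ℕ} (f : (Fin n → Bool) → ℕ)
    (hf : IsLoopCount f)
    (hA : ∀ i : Fin n, f (Function.update (fun _ => false) i true) ≤ f (fun _ => false)) :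
    (∀ s : Fin n → Bool, s ≠ (fun _ => false) →
        odeg (weight f s) ≤ (n : ℤ) + 2 * (f (fun _ => false) : ℤ) - 4) ∧
    (n : ℤ) + 2 * (f (fun _ => false) : ℤ) - 4 < odeg (weight f (fun _ => false)) ∧
    odeg (weight f (fun _ => false)) = (n : ℤ) + 2 * (f (fun _ => false) : ℤ) - 2 ∧
    bracket f ≠ 0 ∧
    odeg (bracket f) = (n : ℤ) + 2 * (f (fun _ => false) : ℤ) - 2 := by
    classical
  set sA : Fin n → Bool := fun _ => false with hsA
  have hbA : beta sA = 0 := by simp [beta, hsA]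
  have haA : alpha sA = n := by simp [alpha, hsA]
  -- degree bound expression for each state
  have hexpr : ∀ s : Fin n → Bool, s ≠ sA →
      (alpha s : ℤ) - beta s + 2 * ((f s - 1 : ℕ) : ℤ)
        ≤ (n : ℤ) + 2 * (f sA : ℤ) - 4 := by
    intro s hs
    have hβ : 1 ≤ beta s := by
      by_contra h
      apply hs
      funext j
      have hb0 : beta s = 0 := by omega
      have : Finset.univ.filter (fun i => s i = true) = ∅ := Finset.card_eq_zero.mp hb0
      have hj : j ∉ Finset.univ.filter (fun i => s i = true) := by simp [this]
      simp at hj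
      simp [hj, hsA]
    have hkey := key f hf hA (beta s - 1) s (by omega)
    rw [← hsA] at hkey
    have hαβ := alpha_add_beta s
    have h1 := hf.1 s
    have h2 := hf.1 sA
    omega
  have hpartA : ∀ s : Fin n → Bool, s ≠ sA →
      odeg (weight f s) ≤ (n : ℤ) + 2 * (f sA : ℤ) - 4 := by
    intro s hs
    rw [weight_odeg]
    exact hexpr s hs
  have hdA : (alpha sA : ℤ) - beta sA + 2 * ((f sA - 1 : ℕ) : ℤ)
      = (n : ℤ) + 2 * (f sA : ℤ) - 2 := by
    have h2 := hf.1 sA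
    rw [haA, hbA]
    push_cast [Nat.cast_sub h2]
    ring
  have hodA : odeg (weight f sA) = (n : ℤ) + 2 * (f sA : ℤ) - 2 := by
    rw [weight_odeg, hdA]
  set d : ℤ := (n : ℤ) + 2 * (f sA : ℤ) - 2 with hd
  have hcoeff : (bracket f).coeff d = (-1) ^ (f sA - 1) := by
    rw [bracket, AddMonoidAlgebra.coeff_sum, Finsupp.finset_sum_apply]
    rw [Finset.sum_eq_single_of_mem sA (Finset.mem_univ _)]
    · rw [← hdA]
      exact weight_coeff f sA
    · intro s _ hs
      by_contra h
      have hmem : d ∈ (weight f s).coeff.support := Finsupp.mem_support_iff.mpr h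
      have := weight_support f s d hmem
      have := hexpr s hs
      omega
  have hsupp : ∀ m ∈ (bracket f).coeff.support, m ≤ d := by
    intro m hm
    rw [bracket, AddMonoidAlgebra.coeff_sum] at hm
    have := Finsupp.support_finset_sum hm
    rw [Finset.mem_biUnion] at this
    obtain ⟨s, _, hms⟩ := this
    have h1 := weight_support f s m hms
    by_cases hcase : s = sA
    · subst hcase
      rw [hdA] at h1
      exact h1
    · have := hexpr s hcase
      omega
  have hne : bracket f ≠ 0 := by
    intro h
    rw [h] at hcoeff
    have : ((-1 : ℤ)) ^ (f sA - 1) ≠ 0 := pow_ne_zero _ (by norm_num)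
    exact this hcoeff.symm
  refine ⟨hpartA, ?_, hodA, hne, ?_⟩
  · rw [hodA]; omega
  · exact odeg_eq_of (by rw [hcoeff]; exact pow_ne_zero _ (by norm_num)) hsupp
end

section
/- Let f be a loop-count function on states of n crossings that is B-pseudo-adequate, i.e. f(Function.update s_B i false) ≤ f(s_B) for every index i. Then for every state s ≠ s_B one has u̲deg w(s) ≥ −n − 2 f(s_B) + 4, which is strictly greater than u̲deg w(s_B) = −n − 2 f(s_B) + 2; consequently the bracket ⟨f⟩ := Σ_s w(s) is nonzero and u̲deg ⟨f⟩ = −n − 2 f(s_B) + 2. -/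
open LaurentPolynomial

/- ### Auxiliary lemmas on `udeg` -/

lemma udeg_eq_min' {g : LaurentPolynomial ℤ} (hne : g.coeff.support.Nonempty) :
    udeg g = g.coeff.support.min' hne := by
  unfold udeg
  rw [← Finset.coe_min' hne, WithTop.untopD_coe]

lemma udeg_le_of_apply_ne_zero {g : LaurentPolynomial ℤ} {m : ℤ} (h : g.coeff m ≠ 0) :
    udeg g ≤ m := by
  have hm : m ∈ g.coeff.support := Finsupp.mem_support_iff.2 h
  rw [udeg_eq_min' ⟨m, hm⟩]
  exact Finset.min'_le _ _ hm

lemma apply_eq_zero_of_lt_udeg {g : LaurentPolynomial ℤ} {m : ℤ} (h : m < udeg g) :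
    g.coeff m = 0 := by
  by_contra hc
  exact absurd (udeg_le_of_apply_ne_zero hc) (not_le.2 h)

lemma udeg_mem {g : LaurentPolynomial ℤ} (hg : g ≠ 0) : g.coeff (udeg g) ≠ 0 := by
  have hne : g.coeff.support.Nonempty := Finsupp.support_nonempty_iff.2 (mt AddMonoidAlgebra.coeff_eq_zero.1 hg)
  rw [udeg_eq_min' hne]
  exact Finsupp.mem_support_iff.1 (Finset.min'_mem _ _)

lemma udeg_eq_of {g : LaurentPolynomial ℤ} {d : ℤ} (h : g.coeff d ≠ 0)
    (hmin : ∀ m ∈ g.coeff.support, d ≤ m) : udeg g = d := by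
  have hm : d ∈ g.coeff.support := Finsupp.mem_support_iff.2 h
  rw [udeg_eq_min' ⟨d, hm⟩]
  exact le_antisymm (Finset.min'_le _ _ hm) (hmin _ (Finset.min'_mem _ _))

lemma coeff_mul_udeg (g h : LaurentPolynomial ℤ) (hg : g ≠ 0) (hh : h ≠ 0) :
    (g * h).coeff (udeg g + udeg h) = g.coeff (udeg g) * h.coeff (udeg h) := by
  classical
  have hgm : udeg g ∈ g.coeff.support := Finsupp.mem_support_iff.2 (udeg_mem hg)
  have hhm : udeg h ∈ h.coeff.support := Finsupp.mem_support_iff.2 (udeg_mem hh)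
  rw [AddMonoidAlgebra.coeff_mul, Finsupp.sum]
  rw [Finset.sum_eq_single_of_mem (udeg g) hgm]
  · rw [Finsupp.sum, Finset.sum_eq_single_of_mem (udeg h) hhm]
    · simp
    · intro b hb hbne
      have : udeg g + b ≠ udeg g + udeg h := fun hcon => hbne (by omega)
      simp [this]
  · intro a ha hane
    have hale : udeg g ≤ a := udeg_le_of_apply_ne_zero (Finsupp.mem_support_iff.1 ha)
    rw [Finsupp.sum]
    apply Finset.sum_eq_zero
    intro b hb
    have hble : udeg h ≤ b := udeg_le_of_apply_ne_zero (Finsupp.mem_support_iff.1 hb)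
    have hlt : udeg g < a := lt_of_le_of_ne hale (Ne.symm hane)
    have : a + b ≠ udeg g + udeg h := by omega
    simp [this]

lemma udeg_mul {g h : LaurentPolynomial ℤ} (hg : g ≠ 0) (hh : h ≠ 0) :
    udeg (g * h) = udeg g + udeg h := by
  classical
  apply udeg_eq_of
  · rw [coeff_mul_udeg g h hg hh]
    exact mul_ne_zero (udeg_mem hg) (udeg_mem hh)
  · intro m hm
    have := AddMonoidAlgebra.support_coeff_mul_subset g h hm
    rw [Finset.mem_add] at this
    obtain ⟨a, ha, b, hb, rfl⟩ := this
    have h1 : udeg g ≤ a := udeg_le_of_apply_ne_zero (Finsupp.mem_support_iff.1 ha)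
    have h2 : udeg h ≤ b := udeg_le_of_apply_ne_zero (Finsupp.mem_support_iff.1 hb)
    omega

lemma T_ne_zero (m : ℤ) : (T m : LaurentPolynomial ℤ) ≠ 0 := by
  intro hc
  have : (T m : LaurentPolynomial ℤ).coeff m = 0 := by rw [hc]; rfl
  simp at this

lemma udeg_T (m : ℤ) : udeg (T m : LaurentPolynomial ℤ) = m := by
  apply udeg_eq_of
  · simp
  · intro k hk
    rw [Finsupp.mem_support_iff] at hk
    by_contra hc
    have : m ≠ k := by omega
    simp [this] at hk

/-- The `δ` polynomial `-A² - A⁻²`. -/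
noncomputable def qdelta : LaurentPolynomial ℤ := -T 2 - T (-2)

lemma qdelta_apply (m : ℤ) :
    qdelta.coeff m = (if (2 : ℤ) = m then (-1 : ℤ) else 0) + (if (-2 : ℤ) = m then (-1 : ℤ) else 0) := by
  show ((-T 2 - T (-2) : LaurentPolynomial ℤ)).coeff m = _
  rw [sub_eq_add_neg]
  rw [AddMonoidAlgebra.coeff_add, AddMonoidAlgebra.coeff_neg, AddMonoidAlgebra.coeff_neg, Finsupp.add_apply, Finsupp.neg_apply, Finsupp.neg_apply]
  simp only [T_apply]
  split_ifs <;> ring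

lemma qdelta_ne_zero : qdelta ≠ 0 := by
  intro hc
  have h := qdelta_apply (-2)
  rw [hc] at h
  norm_num at h

lemma udeg_qdelta : udeg qdelta = -2 := by
  apply udeg_eq_of
  · rw [qdelta_apply]; norm_num
  · intro m hm
    rw [Finsupp.mem_support_iff, qdelta_apply] at hm
    by_contra hc
    have h1 : (2 : ℤ) ≠ m := by omega
    have h2 : (-2 : ℤ) ≠ m := by omega
    simp [h1, h2] at hm

lemma qdelta_at_udeg : qdelta.coeff (-2) = -1 := by
  rw [qdelta_apply]; norm_num

lemma qdelta_pow (k : ℕ) :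
    qdelta ^ k ≠ 0 ∧ udeg (qdelta ^ k) = -2 * k ∧
      (qdelta ^ k).coeff (-2 * (k : ℤ)) = (-1 : ℤ) ^ k := by
  induction k with
  | zero =>
    refine ⟨one_ne_zero, ?_, ?_⟩
    · have : (qdelta ^ 0 : LaurentPolynomial ℤ) = T 0 := by rw [pow_zero, T_zero]
      rw [this, udeg_T]; norm_num
    · have h0 : (qdelta ^ 0 : LaurentPolynomial ℤ) = T 0 := by rw [pow_zero, T_zero]
      have h1 : (-2 : ℤ) * ((0 : ℕ) : ℤ) = 0 := by norm_num
      rw [h0, h1, T_apply]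
      norm_num
  | succ k ih =>
    obtain ⟨hne, hudeg, hcoeff⟩ := ih
    have hpow : qdelta ^ (k + 1) = qdelta ^ k * qdelta := pow_succ qdelta k
    have hne' : qdelta ^ (k + 1) ≠ 0 := by
      rw [hpow]; exact mul_ne_zero hne qdelta_ne_zero
    have hu : udeg (qdelta ^ (k + 1)) = -2 * (k + 1 : ℕ) := by
      rw [hpow, udeg_mul hne qdelta_ne_zero, hudeg, udeg_qdelta]
      push_cast; ring
    refine ⟨hne', hu, ?_⟩
    have h1 : (-2 : ℤ) * ((k : ℕ) + 1 : ℕ) = udeg (qdelta ^ k) + udeg qdelta := by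
      rw [hudeg, udeg_qdelta]; push_cast; ring
    rw [hpow, h1, coeff_mul_udeg _ _ hne qdelta_ne_zero, hudeg, udeg_qdelta,
      qdelta_at_udeg, hcoeff]
    ring

lemma weight_eq {n : ℕ} (f : (Fin n → Bool) → ℕ) (s : Fin n → Bool) :
    weight f s = T ((alpha s : ℤ) - (beta s : ℤ)) * qdelta ^ (f s - 1) := rfl

lemma weight_ne_zero {n : ℕ} (f : (Fin n → Bool) → ℕ) (s : Fin n → Bool) :
    weight f s ≠ 0 := by
  rw [weight_eq]
  exact mul_ne_zero (T_ne_zero _) (qdelta_pow _).1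

lemma udeg_weight {n : ℕ} (f : (Fin n → Bool) → ℕ) (s : Fin n → Bool) :
    udeg (weight f s) = (alpha s : ℤ) - (beta s : ℤ) - 2 * ((f s - 1 : ℕ) : ℤ) := by
  rw [weight_eq, udeg_mul (T_ne_zero _) (qdelta_pow _).1, udeg_T, (qdelta_pow _).2.1]
  ring

lemma coeff_weight_udeg {n : ℕ} (f : (Fin n → Bool) → ℕ) (s : Fin n → Bool) :
    (weight f s).coeff (udeg (weight f s)) = (-1 : ℤ) ^ (f s - 1) := by
  rw [weight_eq]
  have h := coeff_mul_udeg (T ((alpha s : ℤ) - (beta s : ℤ))) (qdelta ^ (f s - 1))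
    (T_ne_zero _) (qdelta_pow _).1
  have hu : udeg (T ((alpha s : ℤ) - (beta s : ℤ)) * qdelta ^ (f s - 1)) =
      udeg (T ((alpha s : ℤ) - (beta s : ℤ))) + udeg (qdelta ^ (f s - 1)) :=
    udeg_mul (T_ne_zero _) (qdelta_pow _).1
  rw [hu, h, (qdelta_pow (f s - 1)).2.1, (qdelta_pow (f s - 1)).2.2]
  simp [udeg_T]

lemma alpha_sB {n : ℕ} : alpha (fun _ : Fin n => true) = 0 := by
  unfold alpha; simp

lemma beta_sB {n : ℕ} : beta (fun _ : Fin n => true) = n := by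
  have := alpha_add_beta (fun _ : Fin n => true)
  rw [alpha_sB] at this
  omega

lemma alpha_pos_of_ne {n : ℕ} {s : Fin n → Bool} (h : s ≠ fun _ => true) :
    1 ≤ alpha s := by
  classical
  have : ∃ i, s i = false := by
    by_contra hc
    push_neg at hc
    exact h (funext fun i => by
      have := hc i
      cases hsi : s i
      · exact absurd hsi (hc i)
      · rfl)
  obtain ⟨i, hi⟩ := this
  have : i ∈ Finset.univ.filter (fun j => s j = false) := by simp [hi]
  have := Finset.card_pos.2 ⟨i, this⟩
  unfold alpha
  omega

lemma alpha_update_true {n : ℕ} {s : Fin n → Bool} {i : Fin n} (hi : s i = false) :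
    alpha (Function.update s i true) = alpha s - 1 := by
  classical
  have hmem : i ∈ Finset.univ.filter (fun j => s j = false) := by simp [hi]
  have hset : Finset.univ.filter (fun j => Function.update s i true j = false)
      = (Finset.univ.filter (fun j => s j = false)).erase i := by
    ext j
    simp only [Finset.mem_filter, Finset.mem_univ, true_and, Finset.mem_erase]
    by_cases hj : j = i
    · subst hj; simp [Function.update_self]
    · simp [Function.update_of_ne hj, hj]
  unfold alpha
  rw [hset, Finset.card_erase_of_mem hmem]

lemma loop_bound {n : ℕ} (f : (Fin n → Bool) → ℕ) (hf : IsLoopCount f)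
    (hB : ∀ i : Fin n, f (Function.update (fun _ => true) i false) ≤ f (fun _ => true)) :
    ∀ (a : ℕ) (s : Fin n → Bool), alpha s = a → 1 ≤ a →
      f s + 1 ≤ f (fun _ => true) + a := by
  intro a
  induction a with
  | zero => intro s _ h; omega
  | succ a ih =>
    intro s hs _
    have hex : ∃ i, s i = false := by
      by_contra hc
      push_neg at hc
      have : s = fun _ => true := funext fun i => by
        cases hsi : s i
        · exact absurd hsi (hc i)
        · rfl
      rw [this, alpha_sB] at hs
      omega
    obtain ⟨i, hi⟩ := hex
    by_cases ha : a = 0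
    · -- alpha s = 1 : s is the state s_B with crossing i flipped
      subst ha
      have huniq : ∀ j, j ≠ i → s j = true := by
        intro j hj
        by_contra hc
        have hjf : s j = false := Bool.eq_false_iff.mpr hc
        have hsub : ({i, j} : Finset (Fin n)) ⊆ Finset.univ.filter (fun k => s k = false) := by
          intro k hk
          simp only [Finset.mem_insert, Finset.mem_singleton] at hk
          rcases hk with rfl | rfl <;> simp [hi, hjf]
        have hcard : ({i, j} : Finset (Fin n)).card = 2 := Finset.card_pair (Ne.symm hj)
        have := Finset.card_le_card hsub
        unfold alpha at hs
        omega
      have hs1 : s = Function.update (fun _ => true) i false := by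
        funext j
        by_cases hj : j = i
        · subst hj; simp [Function.update_self, hi]
        · simp [Function.update_of_ne hj, huniq j hj]
      rw [hs1]
      have := hB i
      omega
    · -- flip crossing i from false to true
      set s' := Function.update s i true with hs'
      have hα : alpha s' = a := by
        rw [hs', alpha_update_true hi, hs]
        omega
      have hstep := hf.2 s i
      rw [hi] at hstep
      have hupd : Function.update s i (!false) = s' := rfl
      rw [hupd, abs_le] at hstep
      have hih := ih s' hα (Nat.one_le_iff_ne_zero.2 ha)
      omega

/-- If `f` is B-pseudo-adequate, then every state other than `s_B` has weight of
minimal degree at least `-n - 2 f(s_B) + 4`, strictly greater than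
`u̲deg w(s_B) = -n - 2 f(s_B) + 2`; consequently the bracket is nonzero and has
minimal degree `-n - 2 f(s_B) + 2`. -/
theorem udeg_bracket_of_B_pseudo_adequate {n : ℕ} (f : (Fin n → Bool) → ℕ)
    (hf : IsLoopCount f)
    (hB : ∀ i : Fin n, f (Function.update (fun _ => true) i false) ≤ f (fun _ => true)) :
    (∀ s : Fin n → Bool, s ≠ (fun _ => true) →
        -(n : ℤ) - 2 * (f (fun _ => true) : ℤ) + 4 ≤ udeg (weight f s)) ∧
    udeg (weight f (fun _ => true)) < -(n : ℤ) - 2 * (f (fun _ => true) : ℤ) + 4 ∧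
    udeg (weight f (fun _ => true)) = -(n : ℤ) - 2 * (f (fun _ => true) : ℤ) + 2 ∧
    bracket f ≠ 0 ∧
    udeg (bracket f) = -(n : ℤ) - 2 * (f (fun _ => true) : ℤ) + 2 := by
  classical
  set sB : Fin n → Bool := fun _ => true with hsB
  have hfB1 : 1 ≤ f sB := hf.1 sB
  -- udeg of weights
  have hudegB : udeg (weight f sB) = -(n : ℤ) - 2 * (f sB : ℤ) + 2 := by
    rw [udeg_weight]
    rw [hsB]
    rw [alpha_sB, beta_sB]
    have : ((f sB - 1 : ℕ) : ℤ) = (f sB : ℤ) - 1 := by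
      rw [hsB] at hfB1 ⊢
      omega
    rw [hsB] at this
    rw [this]
    ring
  have hge : ∀ s : Fin n → Bool, s ≠ sB →
      -(n : ℤ) - 2 * (f sB : ℤ) + 4 ≤ udeg (weight f s) := by
    intro s hs
    have hαpos : 1 ≤ alpha s := alpha_pos_of_ne hs
    have hbound := loop_bound f hf hB (alpha s) s rfl hαpos
    have hab := alpha_add_beta s
    have hfs1 : 1 ≤ f s := hf.1 s
    rw [udeg_weight]
    have hcast : ((f s - 1 : ℕ) : ℤ) = (f s : ℤ) - 1 := by omega
    rw [hcast]
    have h1 : (f s : ℤ) + 1 ≤ (f sB : ℤ) + (alpha s : ℤ) := by exact_mod_cast hbound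
    have h2 : (alpha s : ℤ) + (beta s : ℤ) = (n : ℤ) := by exact_mod_cast hab
    omega
  -- coefficient of bracket at d₀
  set d₀ : ℤ := -(n : ℤ) - 2 * (f sB : ℤ) + 2 with hd₀
  have hcoeffB : (weight f sB).coeff d₀ = (-1 : ℤ) ^ (f sB - 1) := by
    rw [← hudegB]
    exact coeff_weight_udeg f sB
  have hcoeff_other : ∀ s : Fin n → Bool, s ≠ sB → ∀ m : ℤ, m ≤ d₀ → (weight f s).coeff m = 0 := by
    intro s hs m hm
    apply apply_eq_zero_of_lt_udeg
    have := hge s hs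
    omega
  have hbr : ∀ m : ℤ, m ≤ d₀ → (bracket f).coeff m =
      (weight f sB).coeff m := by
    intro m hm
    unfold bracket
    rw [AddMonoidAlgebra.coeff_sum, Finsupp.finset_sum_apply]
    rw [Finset.sum_eq_single_of_mem sB (Finset.mem_univ _)]
    · intro s _ hsne
      exact hcoeff_other s hsne m hm
  have hbrd₀ : (bracket f).coeff d₀ = (-1 : ℤ) ^ (f sB - 1) := by
    rw [hbr d₀ le_rfl, hcoeffB]
  have hpne : ((-1 : ℤ) ^ (f sB - 1)) ≠ 0 := pow_ne_zero _ (by norm_num)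
  have hbrne : bracket f ≠ 0 := by
    intro hc
    rw [hc] at hbrd₀
    simp only [AddMonoidAlgebra.coeff_zero, Finsupp.coe_zero, Pi.zero_apply] at hbrd₀
    exact hpne hbrd₀.symm
  refine ⟨hge, by rw [hudegB]; omega, hudegB, hbrne, ?_⟩
  apply udeg_eq_of
  · rw [hbrd₀]
    exact hpne
  · intro m hmem
    by_contra hc
    push_neg at hc
    have hm0 : (bracket f).coeff m = 0 := by
      rw [hbr m (le_of_lt hc)]
      apply apply_eq_zero_of_lt_udeg
      omega
    exact absurd hm0 (Finsupp.mem_support_iff.1 hmem)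
end

section
/- (Equality in the refined KMT inequality for pseudo-adequate diagrams, abstract form.) Let f be a loop-count function on states of n crossings that is pseudo-adequate, i.e. f(Function.update s_A i true) ≤ f(s_A) and f(Function.update s_B i false) ≤ f(s_B) for every index i. Then the bracket ⟨f⟩ := Σ_s w(s) is nonzero and span ⟨f⟩ = 2n + 2(f(s_A) + f(s_B)) − 4. -/
open LaurentPolynomial

/-! ### Auxiliary lemmas -/

noncomputable def dl : LaurentPolynomial ℤ := -T 2 - T (-2)

lemma mul_T_apply (g : LaurentPolynomial ℤ) (m d : ℤ) : (g * (T m : LaurentPolynomial ℤ)).coeff d = g.coeff (d - m) := by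
  have : (T m : LaurentPolynomial ℤ) = AddMonoidAlgebra.single m (1 : ℤ) := rfl
  rw [this, AddMonoidAlgebra.coeff_mul_single_apply, mul_one, sub_eq_add_neg]

lemma T_mul_apply (g : LaurentPolynomial ℤ) (m d : ℤ) : ((T m : LaurentPolynomial ℤ) * g).coeff d = g.coeff (d - m) := by
  have : (T m : LaurentPolynomial ℤ) = AddMonoidAlgebra.single m (1 : ℤ) := rfl
  rw [this, AddMonoidAlgebra.coeff_single_mul_apply, one_mul, neg_add_eq_sub]

lemma mul_dl_apply (g : LaurentPolynomial ℤ) (d : ℤ) :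
    (g * dl).coeff d = -(g.coeff (d - 2)) - g.coeff (d + 2) := by
  rw [dl, mul_sub, mul_neg, AddMonoidAlgebra.coeff_sub, Finsupp.sub_apply, AddMonoidAlgebra.coeff_neg, Finsupp.neg_apply, mul_T_apply, mul_T_apply]
  norm_num [sub_neg_eq_add]

lemma lp_one_apply (d : ℤ) : (1 : LaurentPolynomial ℤ).coeff d = if (0 : ℤ) = d then 1 else 0 := by
  rw [← T_zero, T_apply]

lemma dl_pow_spec (k : ℕ) :
    (dl ^ k).coeff (2 * k) = (-1) ^ k ∧ (dl ^ k).coeff (-(2 * k)) = (-1) ^ k ∧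
      (∀ d : ℤ, 2 * k < d → (dl ^ k).coeff d = 0) ∧
      (∀ d : ℤ, d < -(2 * k) → (dl ^ k).coeff d = 0) := by
  induction k with
  | zero =>
    refine ⟨by simp [lp_one_apply], by simp [lp_one_apply], ?_, ?_⟩
    · intro d hd
      rw [pow_zero, lp_one_apply, if_neg (by omega)]
    · intro d hd
      rw [pow_zero, lp_one_apply, if_neg (by omega)]
  | succ k ih =>
    obtain ⟨h1, h2, h3, h4⟩ := ih
    have hcast : (((k : ℤ) + 1)) = ((k + 1 : ℕ) : ℤ) := by push_cast; ring
    refine ⟨?_, ?_, ?_, ?_⟩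
    · rw [pow_succ, mul_dl_apply]
      have e1 : 2 * ((k : ℤ) + 1) - 2 = 2 * k := by ring
      have e2 : (2 : ℤ) * k < 2 * ((k : ℤ) + 1) + 2 := by omega
      rw [← hcast] at *
      rw [e1, h1, h3 _ e2]
      ring
    · rw [pow_succ, mul_dl_apply]
      have e1 : -(2 * ((k : ℤ) + 1)) + 2 = -(2 * k) := by ring
      have e2 : -(2 * ((k : ℤ) + 1)) - 2 < -(2 * (k : ℤ)) := by omega
      rw [← hcast] at *
      rw [e1, h2, h4 _ e2]
      ring
    · intro d hd
      rw [← hcast] at hd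
      rw [pow_succ, mul_dl_apply, h3 _ (by omega), h3 _ (by omega)]
      ring
    · intro d hd
      rw [← hcast] at hd
      rw [pow_succ, mul_dl_apply, h4 _ (by omega), h4 _ (by omega)]
      ring

lemma weight_apply {n : ℕ} (f : (Fin n → Bool) → ℕ) (s : Fin n → Bool) (d : ℤ) :
    (weight f s).coeff d = (dl ^ (f s - 1)).coeff (d - ((alpha s : ℤ) - (beta s : ℤ))) := by
  rw [weight, ← dl, T_mul_apply]

/-- Generic count of the number of crossings with a given splice. -/
def cnt {n : ℕ} (b : Bool) (s : Fin n → Bool) : ℕ :=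
  (Finset.univ.filter (fun i => s i = b)).card

lemma alpha_eq_cnt {n : ℕ} (s : Fin n → Bool) : alpha s = cnt false s := rfl
lemma beta_eq_cnt {n : ℕ} (s : Fin n → Bool) : beta s = cnt true s := rfl

lemma cnt_update {n : ℕ} {s : Fin n → Bool} {i : Fin n} {c b' : Bool}
    (h : s i = c) (hb : b' ≠ c) :
    cnt c (Function.update s i b') + 1 = cnt c s := by
  have hset : (Finset.univ.filter (fun j => Function.update s i b' j = c)) =
      (Finset.univ.filter (fun j => s j = c)).erase i := by
    ext j
    by_cases hj : j = i <;>
      simp [hj, Function.update_apply, h, hb]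
  rw [cnt, cnt, hset, Finset.card_erase_add_one (by simp [h])]

lemma cnt_pos_iff {n : ℕ} {c : Bool} {s : Fin n → Bool} :
    1 ≤ cnt c s ↔ ∃ i, s i = c := by
  simp only [cnt]
  constructor
  · intro h
    obtain ⟨i, hi⟩ := Finset.card_pos.mp h
    exact ⟨i, (Finset.mem_filter.mp hi).2⟩
  · rintro ⟨i, hi⟩
    exact Finset.card_pos.mpr ⟨i, Finset.mem_filter.mpr ⟨Finset.mem_univ i, hi⟩⟩

lemma eq_const_of_cnt_zero {n : ℕ} {s : Fin n → Bool} {b : Bool}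
    (h : cnt (!b) s = 0) : s = fun _ => b := by
  funext j
  by_contra hj
  have hsj : s j = !b := by cases b <;> cases hsj : s j <;> simp_all
  have : j ∈ Finset.univ.filter (fun i => s i = !b) :=
    Finset.mem_filter.mpr ⟨Finset.mem_univ j, hsj⟩
  rw [cnt, Finset.card_eq_zero] at h
  simp [h] at this

lemma f_bound {n : ℕ} (f : (Fin n → Bool) → ℕ) (hf : IsLoopCount f) (b : Bool)
    (hb : ∀ i : Fin n, f (Function.update (fun _ => b) i (!b)) ≤ f (fun _ => b)) :
    ∀ k : ℕ, ∀ s : Fin n → Bool, cnt (!b) s = k + 1 →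
      f s + 1 ≤ f (fun _ => b) + (k + 1) := by
  intro k
  induction k with
  | zero =>
    intro s hs
    obtain ⟨i, hi⟩ := cnt_pos_iff.mp (show 1 ≤ cnt (!b) s by omega)
    have hseq : s = Function.update (fun _ => b) i (!b) := by
      obtain ⟨a, ha⟩ := Finset.card_eq_one.mp hs
      have hia : i = a := by
        have : i ∈ ({a} : Finset (Fin n)) := ha ▸
          Finset.mem_filter.mpr ⟨Finset.mem_univ i, hi⟩
        simpa using this
      funext j
      by_cases hj : j = i
      · simp [hj, hi, Function.update_apply]
      · have : j ∉ ({a} : Finset (Fin n)) := by simp [← hia, hj]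
        rw [← ha] at this
        simp only [Finset.mem_filter, Finset.mem_univ, true_and] at this
        have : s j = b := by cases b <;> cases hsj : s j <;> simp_all
        simp [Function.update_apply, hj, this]
    rw [hseq]
    have := hb i
    omega
  | succ k ih =>
    intro s hs
    obtain ⟨i, hi⟩ := cnt_pos_iff.mp (show 1 ≤ cnt (!b) s by omega)
    set s' := Function.update s i b with hs'
    have hcnt : cnt (!b) s' + 1 = cnt (!b) s :=
      cnt_update hi (by cases b <;> simp)
    have hIH := ih s' (by omega)
    have hs'i : s' i = b := by simp [hs']
    have hupd : Function.update s' i (!(s' i)) = s := by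
      rw [hs'i, hs']
      funext j
      by_cases hj : j = i <;> simp [Function.update_apply, hj, hi]
    have hlc := hf.2 s' i
    rw [hupd] at hlc
    rw [abs_le] at hlc
    omega

lemma cnt_add_cnt {n : ℕ} (s : Fin n → Bool) : cnt false s + cnt true s = n := by
  have := Finset.card_filter_add_card_filter_not
    (s := (Finset.univ : Finset (Fin n))) (p := fun i => s i = false)
  simp only [cnt]
  rw [show (Finset.univ.filter (fun i => s i = true)) =
      (Finset.univ.filter (fun i => ¬ s i = false)) by
    ext j; simp]
  simpa using this

lemma cnt_const_self {n : ℕ} (b : Bool) : cnt b (fun _ : Fin n => b) = n := by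
  simp [cnt]

lemma cnt_const_not {n : ℕ} (b : Bool) : cnt (!b) (fun _ : Fin n => b) = 0 := by
  rw [cnt, Finset.card_eq_zero, Finset.filter_eq_empty_iff]
  intro i _
  cases b <;> simp

lemma bracket_apply {n : ℕ} (f : (Fin n → Bool) → ℕ) (d : ℤ) :
    (bracket f).coeff d = ∑ s : Fin n → Bool, (weight f s).coeff d := by
  rw [bracket, AddMonoidAlgebra.coeff_sum]
  exact Finsupp.finset_sum_apply _ _ _

/-- Equality in the refined KMT inequality for pseudo-adequate diagrams:
the bracket is nonzero and `span ⟨f⟩ = 2n + 2(f(s_A) + f(s_B)) - 4`. -/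
theorem lspan_bracket_of_pseudo_adequate {n : ℕ} (f : (Fin n → Bool) → ℕ)
    (hf : IsLoopCount f)
    (hA : ∀ i : Fin n, f (Function.update (fun _ => false) i true) ≤ f (fun _ => false))
    (hB : ∀ i : Fin n, f (Function.update (fun _ => true) i false) ≤ f (fun _ => true)) :
    bracket f ≠ 0 ∧
    lspan (bracket f) =
      2 * (n : ℤ) + 2 * ((f (fun _ => false) : ℤ) + (f (fun _ => true) : ℤ)) - 4 := by
  have h1 := hf.1
  have kcast : ∀ s : Fin n → Bool, ((f s - 1 : ℕ) : ℤ) = (f s : ℤ) - 1 := fun s => by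
    rw [Nat.cast_sub (h1 s), Nat.cast_one]
  have hab : ∀ s : Fin n → Bool, (alpha s : ℤ) + (beta s : ℤ) = (n : ℤ) := fun s => by
    exact_mod_cast congrArg (Nat.cast (R := ℤ))
      (by rw [alpha_eq_cnt, beta_eq_cnt]; exact cnt_add_cnt s)
  have haA : alpha (fun _ : Fin n => false) = n := cnt_const_self false
  have hbA : beta (fun _ : Fin n => false) = 0 := by
    exact cnt_const_not (n := n) false
  have haB : alpha (fun _ : Fin n => true) = 0 := by
    exact cnt_const_not (n := n) true
  have hbB : beta (fun _ : Fin n => true) = n := cnt_const_self true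
  -- pseudo-adequacy bounds
  have hfA : ∀ s : Fin n → Bool, s ≠ (fun _ => false) →
      (f s : ℤ) + 1 ≤ (f (fun _ => false) : ℤ) + (beta s : ℤ) := by
    intro s hs
    rcases Nat.eq_zero_or_pos (cnt true s) with h0 | h0
    · exact absurd (eq_const_of_cnt_zero (b := false) (by simpa using h0)) hs
    · have := f_bound f hf false (by simpa using hA) (cnt true s - 1) s (by simp only [Bool.not_false]; omega)
      rw [beta_eq_cnt]
      omega
  have hfB : ∀ s : Fin n → Bool, s ≠ (fun _ => true) →
      (f s : ℤ) + 1 ≤ (f (fun _ => true) : ℤ) + (alpha s : ℤ) := by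
    intro s hs
    rcases Nat.eq_zero_or_pos (cnt false s) with h0 | h0
    · exact absurd (eq_const_of_cnt_zero (b := true) (by simpa using h0)) hs
    · have := f_bound f hf true (by simpa using hB) (cnt false s - 1) s (by simp only [Bool.not_true]; omega)
      rw [alpha_eq_cnt]
      omega
  -- coefficient vanishing / extremal coefficients of a single weight
  have wzero_top : ∀ s : Fin n → Bool, ∀ d : ℤ,
      ((alpha s : ℤ) - (beta s : ℤ)) + 2 * ((f s : ℤ) - 1) < d → (weight f s).coeff d = 0 := by
    intro s d hd
    rw [weight_apply]
    exact (dl_pow_spec (f s - 1)).2.2.1 _ (by rw [kcast s]; omega)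
  have wzero_bot : ∀ s : Fin n → Bool, ∀ d : ℤ,
      d < ((alpha s : ℤ) - (beta s : ℤ)) - 2 * ((f s : ℤ) - 1) → (weight f s).coeff d = 0 := by
    intro s d hd
    rw [weight_apply]
    exact (dl_pow_spec (f s - 1)).2.2.2 _ (by rw [kcast s]; omega)
  have wtop : ∀ s : Fin n → Bool,
      (weight f s).coeff (((alpha s : ℤ) - (beta s : ℤ)) + 2 * ((f s : ℤ) - 1)) =
        (-1) ^ (f s - 1) := by
    intro s
    rw [weight_apply]
    have harg : ((alpha s : ℤ) - (beta s : ℤ)) + 2 * ((f s : ℤ) - 1) -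
        ((alpha s : ℤ) - (beta s : ℤ)) = 2 * ((f s - 1 : ℕ) : ℤ) := by
      rw [kcast s]; ring
    rw [harg]
    exact (dl_pow_spec (f s - 1)).1
  have wbot : ∀ s : Fin n → Bool,
      (weight f s).coeff (((alpha s : ℤ) - (beta s : ℤ)) - 2 * ((f s : ℤ) - 1)) =
        (-1) ^ (f s - 1) := by
    intro s
    rw [weight_apply]
    have harg : ((alpha s : ℤ) - (beta s : ℤ)) - 2 * ((f s : ℤ) - 1) -
        ((alpha s : ℤ) - (beta s : ℤ)) = -(2 * ((f s - 1 : ℕ) : ℤ)) := by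
      rw [kcast s]; ring
    rw [harg]
    exact (dl_pow_spec (f s - 1)).2.1
  -- the two extremal degrees
  set D : ℤ := (n : ℤ) + 2 * (f (fun _ => false) : ℤ) - 2 with hD
  set E : ℤ := -(n : ℤ) - 2 * (f (fun _ => true) : ℤ) + 2 with hE
  have hDtop : (bracket f).coeff D = (-1) ^ (f (fun _ : Fin n => false) - 1) := by
    rw [bracket_apply]
    rw [Finset.sum_eq_single (fun _ : Fin n => false)]
    · have hm : ((alpha (fun _ : Fin n => false) : ℤ) - (beta (fun _ : Fin n => false) : ℤ))
          + 2 * ((f (fun _ : Fin n => false) : ℤ) - 1) = D := by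
        rw [haA, hbA, hD]; push_cast; ring
      rw [← hm]
      exact wtop _
    · intro s _ hs
      apply wzero_top
      have h2 := hfA s hs
      have h3 := hab s
      omega
    · intro h
      exact absurd (Finset.mem_univ _) h
  have hEbot : (bracket f).coeff E = (-1) ^ (f (fun _ : Fin n => true) - 1) := by
    rw [bracket_apply]
    rw [Finset.sum_eq_single (fun _ : Fin n => true)]
    · have hm : ((alpha (fun _ : Fin n => true) : ℤ) - (beta (fun _ : Fin n => true) : ℤ))
          - 2 * ((f (fun _ : Fin n => true) : ℤ) - 1) = E := by
        rw [haB, hbB, hE]; push_cast; ring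
      rw [← hm]
      exact wbot _
    · intro s _ hs
      apply wzero_bot
      have h2 := hfB s hs
      have h3 := hab s
      omega
    · intro h
      exact absurd (Finset.mem_univ _) h
  have hhi : ∀ d : ℤ, D < d → (bracket f).coeff d = 0 := by
    intro d hd
    rw [bracket_apply]
    apply Finset.sum_eq_zero
    intro s _
    apply wzero_top
    by_cases hs : s = (fun _ : Fin n => false)
    · subst hs
      rw [haA, hbA] at *
      omega
    · have h2 := hfA s hs
      have h3 := hab s
      omega
  have hlo : ∀ d : ℤ, d < E → (bracket f).coeff d = 0 := by
    intro d hd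
    rw [bracket_apply]
    apply Finset.sum_eq_zero
    intro s _
    apply wzero_bot
    by_cases hs : s = (fun _ : Fin n => true)
    · subst hs
      rw [haB, hbB] at *
      omega
    · have h2 := hfB s hs
      have h3 := hab s
      omega
  have hmemD : D ∈ (bracket f).coeff.support :=
    Finsupp.mem_support_iff.mpr (by rw [hDtop]; exact pow_ne_zero _ (by norm_num))
  have hmemE : E ∈ (bracket f).coeff.support :=
    Finsupp.mem_support_iff.mpr (by rw [hEbot]; exact pow_ne_zero _ (by norm_num))
  have hne : bracket f ≠ 0 := fun h => by simp [h] at hmemD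
  have hmax : (bracket f).coeff.support.max = (D : WithBot ℤ) := by
    refine le_antisymm (Finset.max_le fun b hb => ?_) (Finset.le_max hmemD)
    have hbD : b ≤ D := by
      by_contra h
      exact (Finsupp.mem_support_iff.mp hb) (hhi b (by omega))
    exact_mod_cast hbD
  have hmin : (bracket f).coeff.support.min = (E : WithTop ℤ) := by
    refine le_antisymm (Finset.min_le hmemE) (Finset.le_min fun b hb => ?_)
    have hbE : E ≤ b := by
      by_contra h
      exact (Finsupp.mem_support_iff.mp hb) (hlo b (by omega))
    exact_mod_cast hbE
  refine ⟨hne, ?_⟩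
  rw [lspan, odeg, udeg, hmax, hmin, WithBot.unbotD_coe, WithTop.untopD_coe, hD, hE]
  ring
end

section
/- (Abstract core of the properly-virtual criterion.) Let f be a pseudo-adequate loop-count function on states of n crossings, and let f′ be a pseudo-adequate loop-count function on states of n + 1 crossings, such that f′(s_A′) = f(s_A) + 1 and f′(s_B′) = f(s_B) + 1 (where s_A, s_B and s_A′, s_B′ are the constant-false and constant-true states for n and n + 1 crossings respectively; this models obtaining one diagram from the other by virtualizing a single real crossing). Then span ⟨f′⟩ = span ⟨f⟩ + 6; in particular, span ⟨f⟩ and span ⟨f′⟩ are not both divisible by 4. -/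
open LaurentPolynomial

noncomputable def cf (p : LaurentPolynomial ℤ) (j : ℤ) : ℤ := p.coeff j

lemma cf_T_mul (p : LaurentPolynomial ℤ) (m j : ℤ) : cf (T m * p) j = cf p (j - m) := by
  rw [cf, cf, show (T m : LaurentPolynomial ℤ) = AddMonoidAlgebra.single m 1 from rfl,
    AddMonoidAlgebra.coeff_single_mul_apply, one_mul, neg_add_eq_sub]

lemma cf_mul_T (p : LaurentPolynomial ℤ) (m j : ℤ) : cf (p * T m) j = cf p (j - m) := by
  rw [cf, cf, show (T m : LaurentPolynomial ℤ) = AddMonoidAlgebra.single m 1 from rfl,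
    AddMonoidAlgebra.coeff_mul_single_apply, mul_one, sub_eq_add_neg]

lemma cf_one (j : ℤ) : cf 1 j = if j = 0 then 1 else 0 := by
  rw [cf]
  show (Finsupp.single (0:ℤ) (1:ℤ)) j = _
  rw [Finsupp.single_apply]
  simp [eq_comm]

lemma cf_sub (p q : LaurentPolynomial ℤ) (j : ℤ) : cf (p - q) j = cf p j - cf q j := rfl

lemma cf_neg (p : LaurentPolynomial ℤ) (j : ℤ) : cf (-p) j = -(cf p j) := rfl

lemma cf_sum {ι : Type*} (s : Finset ι) (g : ι → LaurentPolynomial ℤ) (j : ℤ) :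
    cf (∑ i ∈ s, g i) j = ∑ i ∈ s, cf (g i) j := by
  simp only [cf, AddMonoidAlgebra.coeff_sum, Finsupp.finset_sum_apply]

lemma mem_support_iff_cf (p : LaurentPolynomial ℤ) (j : ℤ) : j ∈ p.coeff.support ↔ cf p j ≠ 0 :=
  Finsupp.mem_support_iff

lemma cf_mul_q (p : LaurentPolynomial ℤ) (j : ℤ) :
    cf (p * (-T 2 - T (-2))) j = -(cf p (j - 2)) - cf p (j + 2) := by
  rw [mul_sub, mul_neg, cf_sub, cf_neg, cf_mul_T, cf_mul_T, sub_neg_eq_add]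

lemma cf_qpow_gt : ∀ (k : ℕ) (j : ℤ), 2 * (k : ℤ) < j →
    cf ((-T 2 - T (-2) : LaurentPolynomial ℤ) ^ k) j = 0
  | 0, j, h => by rw [pow_zero, cf_one, if_neg (by omega)]
  | (k+1), j, h => by
    rw [pow_succ, cf_mul_q,
      cf_qpow_gt k (j-2) (by push_cast at h ⊢; omega),
      cf_qpow_gt k (j+2) (by push_cast at h ⊢; omega)]
    ring

lemma cf_qpow_top : ∀ (k : ℕ),
    cf ((-T 2 - T (-2) : LaurentPolynomial ℤ) ^ k) (2 * (k : ℤ)) = (-1) ^ k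
  | 0 => by rw [pow_zero, cf_one]; norm_num
  | (k+1) => by
    rw [pow_succ, cf_mul_q,
      show 2 * ((k+1 : ℕ) : ℤ) - 2 = 2 * k by push_cast; ring,
      cf_qpow_top k,
      cf_qpow_gt k (2 * ((k+1 : ℕ) : ℤ) + 2) (by push_cast; omega)]
    ring

lemma cf_qpow_lt : ∀ (k : ℕ) (j : ℤ), j < -(2 * (k : ℤ)) →
    cf ((-T 2 - T (-2) : LaurentPolynomial ℤ) ^ k) j = 0
  | 0, j, h => by rw [pow_zero, cf_one, if_neg (by omega)]
  | (k+1), j, h => by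
    rw [pow_succ, cf_mul_q,
      cf_qpow_lt k (j-2) (by push_cast at h ⊢; omega),
      cf_qpow_lt k (j+2) (by push_cast at h ⊢; omega)]
    ring

lemma cf_qpow_bot : ∀ (k : ℕ),
    cf ((-T 2 - T (-2) : LaurentPolynomial ℤ) ^ k) (-(2 * (k : ℤ))) = (-1) ^ k
  | 0 => by rw [pow_zero, cf_one]; norm_num
  | (k+1) => by
    rw [pow_succ, cf_mul_q,
      show -(2 * ((k+1 : ℕ) : ℤ)) + 2 = -(2 * k) by push_cast; ring,
      cf_qpow_bot k,
      cf_qpow_lt k (-(2 * ((k+1 : ℕ) : ℤ)) - 2) (by push_cast; omega)]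
    ring

lemma alpha_constF {n : ℕ} : alpha (fun _ => false : Fin n → Bool) = n := by
  simp [alpha]
lemma beta_constF {n : ℕ} : beta (fun _ => false : Fin n → Bool) = 0 := by
  simp [beta]
lemma alpha_constT {n : ℕ} : alpha (fun _ => true : Fin n → Bool) = 0 := by
  simp [alpha]
lemma beta_constT {n : ℕ} : beta (fun _ => true : Fin n → Bool) = n := by
  simp [beta]

lemma eq_constF_of_beta {n : ℕ} {s : Fin n → Bool} (h : beta s = 0) :
    s = (fun _ => false) := by
  rw [beta, Finset.card_eq_zero, Finset.filter_eq_empty_iff] at h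
  funext i
  simpa using h (Finset.mem_univ i)

lemma eq_constT_of_alpha {n : ℕ} {s : Fin n → Bool} (h : alpha s = 0) :
    s = (fun _ => true) := by
  rw [alpha, Finset.card_eq_zero, Finset.filter_eq_empty_iff] at h
  funext i
  simpa using h (Finset.mem_univ i)

lemma beta_update_true {n : ℕ} (s : Fin n → Bool) (i : Fin n) (h : s i = false) :
    beta (Function.update s i true) = beta s + 1 := by
  unfold beta
  rw [show (Finset.univ.filter fun j => Function.update s i true j = true)
      = insert i (Finset.univ.filter fun j => s j = true) from ?_]
  · rw [Finset.card_insert_of_notMem (by simp [h])]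
  · ext j
    rcases eq_or_ne j i with rfl | hj <;> simp [Function.update_apply, *]

lemma alpha_update_false {n : ℕ} (s : Fin n → Bool) (i : Fin n) (h : s i = true) :
    alpha (Function.update s i false) = alpha s + 1 := by
  unfold alpha
  rw [show (Finset.univ.filter fun j => Function.update s i false j = false)
      = insert i (Finset.univ.filter fun j => s j = false) from ?_]
  · rw [Finset.card_insert_of_notMem (by simp [h])]
  · ext j
    rcases eq_or_ne j i with rfl | hj <;> simp [Function.update_apply, *]

lemma D_le {n : ℕ} {f : (Fin n → Bool) → ℕ} (hf : IsLoopCount f)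
    (hA : ∀ i : Fin n, f (Function.update (fun _ => false) i true) ≤ f (fun _ => false)) :
    ∀ (s : Fin n → Bool), s ≠ (fun _ => false) →
      (alpha s : ℤ) - beta s + 2 * (f s : ℤ) ≤ (n : ℤ) + 2 * (f (fun _ => false) : ℤ) - 2 := by
  suffices H : ∀ (k : ℕ) (s : Fin n → Bool), beta s = k → s ≠ (fun _ => false) →
      (alpha s : ℤ) - beta s + 2 * (f s : ℤ) ≤ (n : ℤ) + 2 * (f (fun _ => false) : ℤ) - 2 from
    fun s hs => H (beta s) s rfl hs
  intro k
  induction k using Nat.strong_induction_on with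
  | _ k ih =>
    intro s hk hs
    have hex : ∃ i, s i = true := by
      by_contra hno
      push_neg at hno
      exact hs (funext fun i => by simpa using hno i)
    obtain ⟨i, hi⟩ := hex
    set s' := Function.update s i false with hs'def
    have hs'i : s' i = false := by simp [hs'def]
    have hupd : Function.update s' i true = s := by
      funext j
      rcases eq_or_ne j i with rfl | hj <;> simp [hs'def, Function.update_apply, *]
    have hb : beta s = beta s' + 1 := by
      rw [← hupd, beta_update_true s' i hs'i]
    have hab : alpha s + beta s = n := alpha_add_beta s
    have hab' : alpha s' + beta s' = n := alpha_add_beta s'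
    have habs : |(f s : ℤ) - (f s' : ℤ)| ≤ 1 := by
      have h2 := hf.2 s' i
      rw [hs'i] at h2
      simpa [hupd] using h2
    rw [abs_le] at habs
    rcases Nat.eq_zero_or_pos (beta s') with h0 | hpos
    · have hs'0 : s' = (fun _ => false) := eq_constF_of_beta h0
      have hfle : f s ≤ f (fun _ => false) := by
        have h3 := hA i
        rw [← hs'0, hupd] at h3
        rwa [hs'0] at h3
      omega
    · have hs'ne : s' ≠ (fun _ => false) := by
        intro h
        rw [h, beta_constF] at hpos
        omega
      have hih := ih (beta s') (by omega) s' rfl hs'ne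
      omega

lemma E_ge {n : ℕ} {f : (Fin n → Bool) → ℕ} (hf : IsLoopCount f)
    (hB : ∀ i : Fin n, f (Function.update (fun _ => true) i false) ≤ f (fun _ => true)) :
    ∀ (s : Fin n → Bool), s ≠ (fun _ => true) →
      -(n : ℤ) - 2 * (f (fun _ => true) : ℤ) + 2 ≤ (alpha s : ℤ) - beta s - 2 * (f s : ℤ) := by
  suffices H : ∀ (k : ℕ) (s : Fin n → Bool), alpha s = k → s ≠ (fun _ => true) →
      -(n : ℤ) - 2 * (f (fun _ => true) : ℤ) + 2 ≤ (alpha s : ℤ) - beta s - 2 * (f s : ℤ) from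
    fun s hs => H (alpha s) s rfl hs
  intro k
  induction k using Nat.strong_induction_on with
  | _ k ih =>
    intro s hk hs
    have hex : ∃ i, s i = false := by
      by_contra hno
      push_neg at hno
      exact hs (funext fun i => by simpa using hno i)
    obtain ⟨i, hi⟩ := hex
    set s' := Function.update s i true with hs'def
    have hs'i : s' i = true := by simp [hs'def]
    have hupd : Function.update s' i false = s := by
      funext j
      rcases eq_or_ne j i with rfl | hj <;> simp [hs'def, Function.update_apply, *]
    have ha : alpha s = alpha s' + 1 := by
      rw [← hupd, alpha_update_false s' i hs'i]
    have hab : alpha s + beta s = n := alpha_add_beta s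
    have hab' : alpha s' + beta s' = n := alpha_add_beta s'
    have habs : |(f s : ℤ) - (f s' : ℤ)| ≤ 1 := by
      have h2 := hf.2 s' i
      rw [hs'i] at h2
      simpa [hupd] using h2
    rw [abs_le] at habs
    rcases Nat.eq_zero_or_pos (alpha s') with h0 | hpos
    · have hs'0 : s' = (fun _ => true) := eq_constT_of_alpha h0
      have hfle : f s ≤ f (fun _ => true) := by
        have h3 := hB i
        rw [← hs'0, hupd] at h3
        rwa [hs'0] at h3
      omega
    · have hs'ne : s' ≠ (fun _ => true) := by
        intro h
        rw [h, alpha_constT] at hpos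
        omega
      have hih := ih (alpha s') (by omega) s' rfl hs'ne
      omega

lemma cf_weight {n : ℕ} (f : (Fin n → Bool) → ℕ) (s : Fin n → Bool) (j : ℤ) :
    cf (weight f s) j
      = cf ((-T 2 - T (-2) : LaurentPolynomial ℤ) ^ (f s - 1))
          (j - ((alpha s : ℤ) - (beta s : ℤ))) := by
  rw [weight, cf_T_mul]

lemma cf_weight_top {n : ℕ} {f : (Fin n → Bool) → ℕ} {s : Fin n → Bool} (hfs : 1 ≤ f s) :
    cf (weight f s) ((alpha s : ℤ) - beta s + 2 * (f s : ℤ) - 2) = (-1) ^ (f s - 1) := by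
  rw [cf_weight, show (alpha s : ℤ) - beta s + 2 * (f s : ℤ) - 2 - ((alpha s : ℤ) - beta s)
    = 2 * ((f s - 1 : ℕ) : ℤ) by omega, cf_qpow_top]

lemma cf_weight_gt {n : ℕ} {f : (Fin n → Bool) → ℕ} {s : Fin n → Bool} {j : ℤ}
    (hfs : 1 ≤ f s) (h : (alpha s : ℤ) - beta s + 2 * (f s : ℤ) - 2 < j) :
    cf (weight f s) j = 0 := by
  rw [cf_weight]
  exact cf_qpow_gt _ _ (by omega)

lemma cf_weight_bot {n : ℕ} {f : (Fin n → Bool) → ℕ} {s : Fin n → Bool} (hfs : 1 ≤ f s) :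
    cf (weight f s) ((alpha s : ℤ) - beta s - 2 * (f s : ℤ) + 2) = (-1) ^ (f s - 1) := by
  rw [cf_weight, show (alpha s : ℤ) - beta s - 2 * (f s : ℤ) + 2 - ((alpha s : ℤ) - beta s)
    = -(2 * ((f s - 1 : ℕ) : ℤ)) by omega, cf_qpow_bot]

lemma cf_weight_lt {n : ℕ} {f : (Fin n → Bool) → ℕ} {s : Fin n → Bool} {j : ℤ}
    (hfs : 1 ≤ f s) (h : j < (alpha s : ℤ) - beta s - 2 * (f s : ℤ) + 2) :
    cf (weight f s) j = 0 := by
  rw [cf_weight]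
  exact cf_qpow_lt _ _ (by omega)

lemma cf_bracket {n : ℕ} (f : (Fin n → Bool) → ℕ) (j : ℤ) :
    cf (bracket f) j = ∑ s : Fin n → Bool, cf (weight f s) j := by
  rw [bracket, cf_sum]

lemma lspan_bracket {n : ℕ} (f : (Fin n → Bool) → ℕ) (hf : IsLoopCount f)
    (hA : ∀ i : Fin n, f (Function.update (fun _ => false) i true) ≤ f (fun _ => false))
    (hB : ∀ i : Fin n, f (Function.update (fun _ => true) i false) ≤ f (fun _ => true)) :
    lspan (bracket f)
      = 2 * (n : ℤ) + 2 * (f (fun _ => false) : ℤ) + 2 * (f (fun _ => true) : ℤ) - 4 := by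
  set MA : ℤ := (n : ℤ) + 2 * (f (fun _ => false) : ℤ) - 2 with hMA
  set MB : ℤ := -(n : ℤ) - 2 * (f (fun _ => true) : ℤ) + 2 with hMB
  have hDcF : (alpha (fun _ => false : Fin n → Bool) : ℤ) - beta (fun _ => false : Fin n → Bool)
      + 2 * (f (fun _ => false) : ℤ) - 2 = MA := by
    rw [alpha_constF, beta_constF, hMA]; push_cast; ring
  have hEcT : (alpha (fun _ => true : Fin n → Bool) : ℤ) - beta (fun _ => true : Fin n → Bool)
      - 2 * (f (fun _ => true) : ℤ) + 2 = MB := by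
    rw [alpha_constT, beta_constT, hMB]; push_cast; ring
  have htop : cf (bracket f) MA = (-1) ^ (f (fun _ => false : Fin n → Bool) - 1) := by
    rw [cf_bracket, Finset.sum_eq_single_of_mem (fun _ => false) (Finset.mem_univ _)]
    · rw [← hDcF]; exact cf_weight_top (hf.1 _)
    · intro s _ hsne
      have hD := D_le hf hA s hsne
      exact cf_weight_gt (hf.1 _) (by omega)
  have hbot : cf (bracket f) MB = (-1) ^ (f (fun _ => true : Fin n → Bool) - 1) := by
    rw [cf_bracket, Finset.sum_eq_single_of_mem (fun _ => true) (Finset.mem_univ _)]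
    · rw [← hEcT]; exact cf_weight_bot (hf.1 _)
    · intro s _ hsne
      have hE := E_ge hf hB s hsne
      exact cf_weight_lt (hf.1 s) (by omega)
  have hzero_gt : ∀ j : ℤ, MA < j → cf (bracket f) j = 0 := by
    intro j hj
    rw [cf_bracket]
    apply Finset.sum_eq_zero
    intro s _
    rcases eq_or_ne s (fun _ => false) with rfl | hsne
    · exact cf_weight_gt (hf.1 _) (by omega)
    · have hD := D_le hf hA s hsne
      exact cf_weight_gt (hf.1 _) (by omega)
  have hzero_lt : ∀ j : ℤ, j < MB → cf (bracket f) j = 0 := by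
    intro j hj
    rw [cf_bracket]
    apply Finset.sum_eq_zero
    intro s _
    rcases eq_or_ne s (fun _ => true) with rfl | hsne
    · exact cf_weight_lt (hf.1 _) (by omega)
    · have hE := E_ge hf hB s hsne
      exact cf_weight_lt (hf.1 s) (by omega)
  have hmemA : MA ∈ (bracket f).coeff.support :=
    (mem_support_iff_cf _ _).mpr (by rw [htop]; exact pow_ne_zero _ (by norm_num))
  have hmemB : MB ∈ (bracket f).coeff.support :=
    (mem_support_iff_cf _ _).mpr (by rw [hbot]; exact pow_ne_zero _ (by norm_num))
  have hmax : (bracket f).coeff.support.max = (MA : WithBot ℤ) := by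
    apply le_antisymm
    · apply Finset.max_le
      intro b hb
      have hble : b ≤ MA := by
        by_contra h
        push_neg at h
        exact (mem_support_iff_cf _ _).mp hb (hzero_gt b h)
      exact WithBot.coe_le_coe.mpr hble
    · exact Finset.le_max hmemA
  have hmin : (bracket f).coeff.support.min = (MB : WithTop ℤ) := by
    apply le_antisymm
    · exact Finset.min_le hmemB
    · apply Finset.le_min
      intro b hb
      have hble : MB ≤ b := by
        by_contra h
        push_neg at h
        exact (mem_support_iff_cf _ _).mp hb (hzero_lt b h)
      exact WithTop.coe_le_coe.mpr hble
  rw [lspan, odeg, udeg, hmax, hmin, WithBot.unbotD_coe, WithTop.untopD_coe]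
  omega

/-- Abstract core of the properly-virtual criterion: if `f` (on `n` crossings)
and `f'` (on `n + 1` crossings) are pseudo-adequate loop-count functions with
`f'(s_A') = f(s_A) + 1` and `f'(s_B') = f(s_B) + 1`, then
`span ⟨f'⟩ = span ⟨f⟩ + 6`; in particular the two spans are not both divisible by 4. -/
theorem lspan_bracket_virtualization {n : ℕ}
    (f : (Fin n → Bool) → ℕ) (f' : (Fin (n + 1) → Bool) → ℕ)
    (hf : IsLoopCount f) (hf' : IsLoopCount f')
    (hA : ∀ i : Fin n, f (Function.update (fun _ => false) i true) ≤ f (fun _ => false))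
    (hB : ∀ i : Fin n, f (Function.update (fun _ => true) i false) ≤ f (fun _ => true))
    (hA' : ∀ i : Fin (n + 1),
      f' (Function.update (fun _ => false) i true) ≤ f' (fun _ => false))
    (hB' : ∀ i : Fin (n + 1),
      f' (Function.update (fun _ => true) i false) ≤ f' (fun _ => true))
    (hsA : f' (fun _ => false) = f (fun _ => false) + 1)
    (hsB : f' (fun _ => true) = f (fun _ => true) + 1) :
    lspan (bracket f') = lspan (bracket f) + 6 ∧
    ¬ ((4 : ℤ) ∣ lspan (bracket f) ∧ (4 : ℤ) ∣ lspan (bracket f')) := by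
  have l1 := lspan_bracket f hf hA hB
  have l2 := lspan_bracket f' hf' hA' hB'
  rw [hsA, hsB] at l2
  constructor
  · rw [l1, l2]; push_cast; ring
  · rintro ⟨⟨a, ha⟩, ⟨b, hb⟩⟩
    rw [l1] at ha
    rw [l2] at hb
    push_cast at ha hb
    omega
end
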